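/- Fix a positive integer M. Define f(m) = 2φ(m)/|GL₂(ℤ/mℤ)| if M ∣ m and f(m) = φ(m)/|GL₂(ℤ/mℤ)| otherwise. Then ∑_{m≥1} f(m) = C_{d₁} · (1 + M^{-3} ∏_{ℓ ∣ M} ((1−ℓ^{-2})(1−ℓ^{-3}) + ℓ^{-3})^{-1}), where C_{d₁} = ∑_{m≥1} φ(m)/|GL₂(ℤ/mℤ)| = ∏_ℓ (1 + ℓ²/((ℓ²−1)(ℓ³−1))). -/

import Mathlib

open Matrix

variable {R S : Type*} [CommRing R] [CommRing S]

/-- Equiv between GL and matrices with unit determinant. -/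
noncomputable def glEquivDet : GL (Fin 2) R ≃ {A : Matrix (Fin 2) (Fin 2) R // IsUnit A.det} where
  toFun u := ⟨(u : Matrix (Fin 2) (Fin 2) R), (Matrix.isUnit_iff_isUnit_det _).mp u.isUnit⟩
  invFun A := ((Matrix.isUnit_iff_isUnit_det A.1).mpr A.2).unit
  left_inv u := Units.ext (IsUnit.unit_spec _)
  right_inv A := Subtype.ext (IsUnit.unit_spec ((Matrix.isUnit_iff_isUnit_det A.1).mpr A.2))

/-- matrix ring over product. -/
noncomputable def matrixProdEquiv (n : Type*) [Fintype n] [DecidableEq n] :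
    Matrix n n (R × S) ≃+* Matrix n n R × Matrix n n S := by
  refine RingEquiv.ofBijective
    (((RingHom.fst R S).mapMatrix).prod ((RingHom.snd R S).mapMatrix)) ⟨?_, ?_⟩
  · intro A B h
    have h1 := congrArg Prod.fst h
    have h2 := congrArg Prod.snd h
    ext i j
    · exact congrFun (congrFun h1 i) j
    · exact congrFun (congrFun h2 i) j
  · intro ⟨A, B⟩
    exact ⟨fun i j => (A i j, B i j), rfl⟩

lemma cardGL_mul {m n : ℕ} (h : m.Coprime n) :
    Nat.card (GL (Fin 2) (ZMod (m * n))) =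
      Nat.card (GL (Fin 2) (ZMod m)) * Nat.card (GL (Fin 2) (ZMod n)) := by
  have e1 : GL (Fin 2) (ZMod (m * n)) ≃* (Matrix (Fin 2) (Fin 2) (ZMod m) × Matrix (Fin 2) (Fin 2) (ZMod n))ˣ :=
    Units.mapEquiv ((ZMod.chineseRemainder h).mapMatrix.trans (matrixProdEquiv (Fin 2))).toMulEquiv
  rw [Nat.card_congr (e1.toEquiv.trans MulEquiv.prodUnits.toEquiv), Nat.card_prod]

open Function in
lemma card_comp_eq {G H : Type*} [AddGroup G] [AddGroup H] [Finite G] [Finite H]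
    (f : G →+ H) (hf : Surjective f) (q : H → Prop) :
    Nat.card {a : G // q (f a)} * Nat.card H = Nat.card G * Nat.card {b : H // q b} := by
  classical
  have key : ∀ (q : H → Prop), Nat.card {a : G // q (f a)} =
      Nat.card (f.ker) * Nat.card {b : H // q b} := by
    intro q
    have e : {a : G // q (f a)} ≃ Σ b : {b : H // q b}, {a : G // f a = b.1} :=
      { toFun := fun a => ⟨⟨f a.1, a.2⟩, ⟨a.1, rfl⟩⟩
        invFun := fun x => ⟨x.2.1, by rw [x.2.2]; exact x.1.2⟩
        left_inv := fun a => rfl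
        right_inv := fun x => by
          rcases x with ⟨⟨b, hb⟩, ⟨a, ha⟩⟩
          have h' : f a = b := ha
          subst h'
          rfl }
    rw [Nat.card_congr e]
    have := Fintype.ofFinite G
    have := Fintype.ofFinite H
    have : ∀ b : H, Nat.card {a : G // f a = b} = Nat.card f.ker := by
      intro b
      obtain ⟨a₀, ha₀⟩ := hf b
      refine Nat.card_congr ?_
      exact { toFun := fun a => ⟨a.1 - a₀, by
                simp [AddMonoidHom.mem_ker, map_sub, a.2, ha₀]⟩
              invFun := fun x => ⟨x.1 + a₀, by
                have := x.2
                simp only [AddMonoidHom.mem_ker] at this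
                simp [map_add, this, ha₀]⟩
              left_inv := fun a => by simp
              right_inv := fun x => by simp }
    calc Nat.card (Σ b : {b : H // q b}, {a : G // f a = b.1})
        = ∑ b : {b : H // q b}, Nat.card {a : G // f a = b.1} := by
          rw [Nat.card_eq_fintype_card, Fintype.card_sigma]
          exact Finset.sum_congr rfl fun b _ => (Nat.card_eq_fintype_card).symm
      _ = Nat.card f.ker * Nat.card {b : H // q b} := by
          simp only [this]
          rw [Finset.sum_const, Nat.card_eq_fintype_card, smul_eq_mul, mul_comm,
            Nat.card_eq_fintype_card]
          rfl
  have h1 := key q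
  have h2 := key (fun _ => True)
  have e2 : {a : G // True} ≃ G := Equiv.subtypeUnivEquiv (fun _ => trivial)
  rw [Nat.card_congr e2] at h2
  have e3 : {b : H // True} ≃ H := Equiv.subtypeUnivEquiv (fun _ => trivial)
  rw [Nat.card_congr e3] at h2
  rw [h1, h2]
  ring

lemma zmod_isUnit_iff_castHom {p k : ℕ} (hp : p.Prime) (hk : 1 ≤ k) (a : ZMod (p ^ k)) :
    IsUnit a ↔ IsUnit (ZMod.castHom (dvd_pow_self p (Nat.one_le_iff_ne_zero.mp hk)) (ZMod p) a) := by
  have : NeZero (p ^ k) := ⟨pow_ne_zero _ hp.pos.ne'⟩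
  conv_lhs => rw [← ZMod.natCast_zmod_val a]
  rw [ZMod.isUnit_iff_coprime]
  have h2 : (ZMod.castHom (dvd_pow_self p (Nat.one_le_iff_ne_zero.mp hk)) (ZMod p) a)
      = ((a.val : ℕ) : ZMod p) := by
    conv_lhs => rw [← ZMod.natCast_zmod_val a]
    simp
  rw [h2, ZMod.isUnit_iff_coprime]
  constructor
  · intro h; exact (Nat.coprime_pow_right_iff hk _ _).mp h
  · intro h; exact (Nat.coprime_pow_right_iff hk _ _).mpr h

lemma cardGL_prime_pow {p : ℕ} (hp : p.Prime) {k : ℕ} (hk : 1 ≤ k) :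
    Nat.card (GL (Fin 2) (ZMod (p ^ k))) =
      p ^ (4 * (k - 1)) * Nat.card (GL (Fin 2) (ZMod p)) := by
  classical
  have hne : NeZero (p ^ k) := ⟨pow_ne_zero _ hp.pos.ne'⟩
  have hnp : NeZero p := ⟨hp.pos.ne'⟩
  have hdvd : p ∣ p ^ k := dvd_pow_self p (Nat.one_le_iff_ne_zero.mp hk)
  set π : ZMod (p ^ k) →+* ZMod p := ZMod.castHom hdvd (ZMod p)
  set f : Matrix (Fin 2) (Fin 2) (ZMod (p ^ k)) →+* Matrix (Fin 2) (Fin 2) (ZMod p) :=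
    π.mapMatrix
  have hsurj : Function.Surjective f := by
    intro B
    refine ⟨fun i j => ((B i j).val : ZMod (p ^ k)), ?_⟩
    ext i j
    show π _ = _
    simp [π]
  have key := card_comp_eq f.toAddMonoidHom hsurj (fun B => IsUnit B.det)
  have hdet : ∀ A : Matrix (Fin 2) (Fin 2) (ZMod (p ^ k)),
      IsUnit A.det ↔ IsUnit ((f A).det) := by
    intro A
    rw [show (f A).det = π A.det from (RingHom.map_det π A).symm]
    exact zmod_isUnit_iff_castHom hp hk A.det
  have e1 : {A : Matrix (Fin 2) (Fin 2) (ZMod (p ^ k)) // IsUnit A.det} ≃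
      {A : Matrix (Fin 2) (Fin 2) (ZMod (p ^ k)) // IsUnit ((f.toAddMonoidHom A).det)} :=
    Equiv.subtypeEquivRight fun A => hdet A
  have cM : ∀ (m : ℕ) [NeZero m], Nat.card (Matrix (Fin 2) (Fin 2) (ZMod m)) = m ^ 4 := by
    intro m _
    show Nat.card (Fin 2 → Fin 2 → ZMod m) = m ^ 4
    simp [Nat.card_fun, Nat.card_eq_fintype_card, ZMod.card]
    ring
  rw [Nat.card_congr (glEquivDet), Nat.card_congr e1]
  have hGLp : Nat.card (GL (Fin 2) (ZMod p)) =
      Nat.card {B : Matrix (Fin 2) (Fin 2) (ZMod p) // IsUnit B.det} :=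
    Nat.card_congr glEquivDet
  rw [cM p, cM (p ^ k), ← hGLp] at key
  have hpow : (p ^ k) ^ 4 = p ^ (4 * (k - 1)) * p ^ 4 := by
    rw [← pow_mul, ← pow_add]
    congr 1
    omega
  rw [hpow] at key
  refine Nat.eq_of_mul_eq_mul_right (pow_pos hp.pos 4) (key.trans ?_)
  ring

lemma cardGL_prime {p : ℕ} (hp : p.Prime) :
    Nat.card (GL (Fin 2) (ZMod p)) = (p ^ 2 - 1) * (p ^ 2 - p) := by
  have : Fact p.Prime := ⟨hp⟩
  rw [Matrix.card_GL_field]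
  simp [Fin.prod_univ_two, ZMod.card]

lemma cardGL_one : Nat.card (GL (Fin 2) (ZMod 1)) = 1 := by
  have : Subsingleton (GL (Fin 2) (ZMod 1)) := by
    constructor
    intro a b
    exact Units.ext (Subsingleton.elim _ _)
  exact Nat.card_eq_one_iff_unique.mpr ⟨this, ⟨1⟩⟩

lemma cardGL_pos {m : ℕ} (hm : 0 < m) : 0 < Nat.card (GL (Fin 2) (ZMod m)) := by
  have : NeZero m := ⟨hm.ne'⟩
  exact Nat.card_pos

open ArithmeticFunction in
noncomputable def gg : ArithmeticFunction ℝ :=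
  ⟨fun m => (Nat.totient m : ℝ) / (Nat.card (GL (Fin 2) (ZMod m)) : ℝ), by simp⟩

lemma gg_apply (m : ℕ) :
    gg m = (Nat.totient m : ℝ) / (Nat.card (GL (Fin 2) (ZMod m)) : ℝ) := rfl

lemma gg_one : gg 1 = 1 := by
  rw [gg_apply, cardGL_one]
  simp

lemma gg_nonneg (m : ℕ) : 0 ≤ gg m := by
  rw [gg_apply]
  positivity

lemma gg_pos {m : ℕ} (hm : 0 < m) : 0 < gg m := by
  rw [gg_apply]
  apply div_pos
  · exact_mod_cast Nat.totient_pos.mpr hm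
  · exact_mod_cast cardGL_pos hm

lemma gg_mult : gg.IsMultiplicative := by
  refine ArithmeticFunction.IsMultiplicative.iff_ne_zero.mpr ⟨gg_one, ?_⟩
  intro m n hm hn h
  rw [gg_apply, gg_apply, gg_apply, Nat.totient_mul h, cardGL_mul h]
  push_cast
  rw [div_mul_div_comm]

lemma gg_prime_pow {p : ℕ} (hp : p.Prime) {e : ℕ} (he : 1 ≤ e) :
    gg (p ^ e) = (p : ℝ) ^ 2 / ((p : ℝ) ^ 2 - 1) * (((p : ℝ) ^ 3)⁻¹) ^ e := by
  obtain ⟨e', rfl⟩ : ∃ e', e = e' + 1 := ⟨e - 1, by omega⟩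
  rw [gg_apply, cardGL_prime_pow hp he, cardGL_prime hp,
    Nat.totient_prime_pow hp (by omega)]
  have hp2 : (2 : ℕ) ≤ p := hp.two_le
  have hpR : (2 : ℝ) ≤ (p : ℝ) := by exact_mod_cast hp2
  have h1 : ((p ^ 2 - 1 : ℕ) : ℝ) = (p : ℝ) ^ 2 - 1 := by
    have : 1 ≤ p ^ 2 := Nat.one_le_pow _ _ hp.pos
    push_cast [this]
    ring
  have h2 : ((p ^ 2 - p : ℕ) : ℝ) = (p : ℝ) ^ 2 - (p : ℝ) := by
    have : p ≤ p ^ 2 := by nlinarith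
    push_cast [this]
    ring
  have h3 : ((p - 1 : ℕ) : ℝ) = (p : ℝ) - 1 := by
    push_cast [hp.one_le]
    ring
  have h4 : (e' + 1 - 1) = e' := by omega
  have h5 : (4 * (e' + 1 - 1)) = 4 * e' := by omega
  rw [h4]
  push_cast [h1, h2, h3]
  have hp0 : (p : ℝ) ≠ 0 := by linarith
  have hp1 : (p : ℝ) - 1 ≠ 0 := by linarith
  have hp21 : (p : ℝ) ^ 2 - 1 ≠ 0 := by nlinarith
  have hp2p : (p : ℝ) ^ 2 - (p : ℝ) ≠ 0 := by nlinarith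
  field_simp
  rw [one_div, inv_pow, ← pow_mul, show 4 * e' = e' + (3 * (e' + 1) - 3) by omega, pow_add,
    pow_sub₀ _ hp0 (by omega)]
  field_simp

lemma gg_prime_pow_le {p : ℕ} (hp : p.Prime) {k : ℕ} (hk : 1 ≤ k) :
    gg (p ^ k) ≤ (((p : ℕ) : ℝ) ^ k)⁻¹ ^ 2 := by
  rw [gg_prime_pow hp hk]
  have hpR : (2 : ℝ) ≤ (p : ℝ) := by exact_mod_cast hp.two_le
  have hx : (p : ℝ) ≤ (p : ℝ) ^ k := by
    calc (p : ℝ) = (p : ℝ) ^ 1 := (pow_one _).symm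
    _ ≤ (p : ℝ) ^ k := pow_le_pow_right₀ (by linarith) hk
  set x : ℝ := (p : ℝ) ^ k with hxdef
  have hx0 : 0 < x := by positivity
  have hinv : ((p : ℝ) ^ 3)⁻¹ ^ k = (x ^ 3)⁻¹ := by
    rw [hxdef, inv_pow, ← pow_mul, ← pow_mul, mul_comm]
  have h21 : (0:ℝ) < (p : ℝ) ^ 2 - 1 := by nlinarith
  have l1 : (p : ℝ) ^ 2 / ((p : ℝ) ^ 2 - 1) * (x ^ 3)⁻¹ =
      (p : ℝ) ^ 2 / (((p : ℝ) ^ 2 - 1) * x ^ 3) := by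
    rw [inv_eq_one_div, div_mul_div_comm, mul_one]
  have l2 : (((p : ℕ) : ℝ) ^ k)⁻¹ ^ 2 = 1 / x ^ 2 := by
    rw [← hxdef, inv_pow, inv_eq_one_div]
  rw [hinv, l1, l2, div_le_div_iff₀ (by positivity) (by positivity)]
  have hcube : (0:ℝ) ≤ (p : ℝ) ^ 3 - (p : ℝ) ^ 2 - (p : ℝ) := by nlinarith
  nlinarith [mul_le_mul_of_nonneg_left hx
    (by positivity : (0:ℝ) ≤ ((p : ℝ) ^ 2 - 1) * x ^ 2),
    mul_nonneg (sq_nonneg x) hcube, sq_nonneg x, hx0.le]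

lemma gg_le (n : ℕ) : gg n ≤ ((n : ℝ) ^ 2)⁻¹ := by
  rcases Nat.eq_zero_or_pos n with rfl | hn
  · simp
  have hne : n ≠ 0 := hn.ne'
  rw [gg_mult.multiplicative_factorization gg hne]
  have hfact : ((n : ℝ) ^ 2)⁻¹ =
      n.factorization.prod fun p k => (((p : ℕ) : ℝ) ^ k)⁻¹ ^ 2 := by
    conv_lhs => rw [← Nat.factorization_prod_pow_eq_self hne]
    rw [Finsupp.prod, Finsupp.prod]
    push_cast
    rw [← Finset.prod_pow, ← Finset.prod_inv_distrib]
    refine Finset.prod_congr rfl fun p hp => ?_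
    rw [← inv_pow]
  rw [hfact, Finsupp.prod, Finsupp.prod]
  refine Finset.prod_le_prod (fun p _ => gg_nonneg _) fun p hp => ?_
  have hp' : p.Prime := Nat.prime_of_mem_primeFactors (by
    rwa [← Nat.support_factorization])
  have hk : 1 ≤ n.factorization p := by
    have := Finsupp.mem_support_iff.mp hp
    omega
  exact gg_prime_pow_le hp' hk

lemma gg_summable : Summable (fun n => gg n) := by
  refine Summable.of_nonneg_of_le (fun n => gg_nonneg n) (fun n => gg_le n) ?_
  have := Real.summable_one_div_nat_pow.mpr (le_refl 2)
  simpa [one_div] using this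

lemma gg_norm_summable : Summable (fun n => ‖gg n‖) := by
  simpa [Real.norm_of_nonneg (gg_nonneg _)] using gg_summable

section localsums

variable {p : ℕ} (hp : p.Prime)

lemma pR2 (hp : p.Prime) : (2:ℝ) ≤ (p:ℝ) := by exact_mod_cast hp.two_le

lemma r_nonneg : (0:ℝ) ≤ ((p:ℝ)^3)⁻¹ := by positivity

lemma r_lt_one (hp : p.Prime) : ((p:ℝ)^3)⁻¹ < 1 := by
  have := pR2 hp
  rw [inv_lt_one_iff₀]
  right
  nlinarith [this, sq_nonneg ((p:ℝ))]

lemma gg_tsum_shift (hp : p.Prime) (a : ℕ) :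
    ∑' e : ℕ, gg (p ^ (e + (a + 1))) =
      ((p:ℝ)^2 / ((p:ℝ)^2 - 1) * (((p:ℝ)^3)⁻¹)^(a+1)) * (1 - ((p:ℝ)^3)⁻¹)⁻¹ := by
  set r : ℝ := ((p:ℝ)^3)⁻¹ with hrdef
  set c : ℝ := (p:ℝ)^2 / ((p:ℝ)^2 - 1) with hcdef
  have h1 : ∀ e : ℕ, gg (p ^ (e + (a + 1))) = (c * r^(a+1)) * r^e := by
    intro e
    rw [gg_prime_pow hp (by omega), pow_add]
    ring
  rw [tsum_congr h1, tsum_mul_left, tsum_geometric_of_lt_one r_nonneg (r_lt_one hp)]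

lemma gg_pow_summable (hp : p.Prime) : Summable (fun e : ℕ => gg (p ^ e)) := by
  rw [← summable_nat_add_iff 1]
  have h1 : ∀ e : ℕ, gg (p ^ (e + 1)) =
      ((p:ℝ)^2 / ((p:ℝ)^2 - 1) * ((p:ℝ)^3)⁻¹) * (((p:ℝ)^3)⁻¹)^e := by
    intro e
    rw [gg_prime_pow hp (by omega), pow_add]
    ring
  simp only [h1]
  exact (summable_geometric_of_lt_one r_nonneg (r_lt_one hp)).mul_left _

lemma gg_tsum_pow (hp : p.Prime) :
    ∑' e : ℕ, gg (p ^ e) = 1 + (p:ℝ)^2 / (((p:ℝ)^2 - 1) * ((p:ℝ)^3 - 1)) := by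
  rw [Summable.tsum_eq_zero_add (gg_pow_summable hp)]
  simp only [pow_zero, gg_one]
  congr 1
  have := gg_tsum_shift hp 0
  simp only [zero_add] at this
  rw [show (fun e : ℕ => gg (p ^ (e + 1))) = fun e : ℕ => gg (p ^ (e + (0 + 1))) by
    funext e; rw [zero_add], this]
  have h2 : (2:ℝ) ≤ (p:ℝ) := pR2 hp
  have h3 : ((p:ℝ)^3 - 1) ≠ 0 := by nlinarith
  have h4 : ((p:ℝ)^2 - 1) ≠ 0 := by nlinarith
  have h5 : (p:ℝ) ≠ 0 := by linarith
  have h6 : (1 - ((p:ℝ)^3)⁻¹) ≠ 0 := by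
    have := r_lt_one hp
    intro h
    have : ((p:ℝ)^3)⁻¹ = 1 := by linarith
    rw [this] at *
    linarith
  field_simp

end localsums

lemma gg_prod_over {n : ℕ} (hn : n ≠ 0) {s : Finset ℕ} (hs : n.primeFactors ⊆ s) :
    gg n = ∏ p ∈ s, gg (p ^ n.factorization p) := by
  rw [gg_mult.multiplicative_factorization gg hn, Finsupp.prod]
  refine Finset.prod_subset (by rwa [Nat.support_factorization]) ?_
  intro p _ hnp
  rw [Finsupp.notMem_support_iff.mp hnp, pow_zero, gg_one]

lemma gg_mul_shift {M : ℕ} (hM : M ≠ 0) {k₁ k₂ : ℕ} (h1 : k₁ ≠ 0) (h2 : k₂ ≠ 0)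
    (hco : k₁.Coprime k₂) :
    gg (k₁ * k₂ * M) * gg M = gg (k₁ * M) * gg (k₂ * M) := by
  have hne : k₁ * k₂ * M ≠ 0 := by positivity
  have d1 : k₁ * M ∣ k₁ * k₂ * M := ⟨k₂, by ring⟩
  have d2 : k₂ * M ∣ k₁ * k₂ * M := ⟨k₁, by ring⟩
  have dM : M ∣ k₁ * k₂ * M := ⟨k₁ * k₂, by ring⟩
  rw [gg_prod_over hne (subset_refl _), gg_prod_over hM (Nat.primeFactors_mono dM hne),
    gg_prod_over (mul_ne_zero h1 hM) (Nat.primeFactors_mono d1 hne),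
    gg_prod_over (mul_ne_zero h2 hM) (Nat.primeFactors_mono d2 hne),
    ← Finset.prod_mul_distrib, ← Finset.prod_mul_distrib]
  refine Finset.prod_congr rfl fun p hps => ?_
  have hpp : p.Prime := Nat.prime_of_mem_primeFactors hps
  have e0 : (k₁ * k₂ * M).factorization p =
      k₁.factorization p + k₂.factorization p + M.factorization p := by
    rw [Nat.factorization_mul (mul_ne_zero h1 h2) hM, Nat.factorization_mul h1 h2]
    simp
  have e1 : (k₁ * M).factorization p = k₁.factorization p + M.factorization p := by
    rw [Nat.factorization_mul h1 hM]; simp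
  have e2 : (k₂ * M).factorization p = k₂.factorization p + M.factorization p := by
    rw [Nat.factorization_mul h2 hM]; simp
  have hv : k₁.factorization p = 0 ∨ k₂.factorization p = 0 := by
    by_contra hc
    push_neg at hc
    have hd1 : p ∣ k₁ := Nat.dvd_of_factorization_pos hc.1
    have hd2 : p ∣ k₂ := Nat.dvd_of_factorization_pos hc.2
    have : p ∣ 1 := hco ▸ Nat.dvd_gcd hd1 hd2
    exact hpp.one_lt.ne' (Nat.dvd_one.mp this)
  rw [e0, e1, e2]
  rcases hv with hv | hv
  · rw [hv, zero_add, zero_add, mul_comm]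
  · rw [hv, zero_add, add_zero]


open ArithmeticFunction in
noncomputable def hh (M : ℕ) : ArithmeticFunction ℝ :=
  ⟨fun k => gg (k * M) / gg M, by simp⟩

lemma hh_apply (M k : ℕ) : hh M k = gg (k * M) / gg M := rfl

lemma hh_mult {M : ℕ} (hM : M ≠ 0) : (hh M).IsMultiplicative := by
  refine ArithmeticFunction.IsMultiplicative.iff_ne_zero.mpr ⟨?_, ?_⟩
  · rw [hh_apply, one_mul, div_self (gg_pos (Nat.pos_of_ne_zero hM)).ne']
  · intro k₁ k₂ h1 h2 hco
    rw [hh_apply, hh_apply, hh_apply]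
    have hgM : gg M ≠ 0 := (gg_pos (Nat.pos_of_ne_zero hM)).ne'
    rw [div_mul_div_comm, div_eq_div_iff hgM (by positivity)]
    have := gg_mul_shift hM h1 h2 hco
    linear_combination gg M * this

lemma hh_norm_summable {M : ℕ} (hM : M ≠ 0) : Summable (fun k => ‖hh M k‖) := by
  have hgM : 0 < gg M := gg_pos (Nat.pos_of_ne_zero hM)
  have h : Summable (fun k : ℕ => (gg M)⁻¹ * ((k : ℝ) ^ 2)⁻¹) :=
    Summable.mul_left _ (by
      have := Real.summable_one_div_nat_pow.mpr (le_refl 2)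
      simpa [one_div] using this)
  refine h.of_nonneg_of_le (fun k => norm_nonneg _) (fun k => ?_)
  rw [hh_apply, Real.norm_of_nonneg (div_nonneg (gg_nonneg _) hgM.le)]
  have hb : gg (k * M) ≤ ((k : ℝ) ^ 2)⁻¹ := by
    rcases Nat.eq_zero_or_pos k with rfl | hk
    · simpa using gg_le 0
    refine (gg_le (k * M)).trans ?_
    have hle : ((k:ℝ))^2 ≤ (((k * M : ℕ)):ℝ)^2 := by
      have hM1 : 1 ≤ M := Nat.pos_of_ne_zero hM
      have hM1R : (1:ℝ) ≤ (M:ℝ) := by exact_mod_cast hM1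
      have hk0 : (0:ℝ) ≤ (k:ℝ) := by positivity
      have : (k:ℝ) ≤ ((k*M : ℕ):ℝ) := by push_cast; nlinarith
      nlinarith
    exact inv_anti₀ (by positivity) hle
  calc gg (k * M) / gg M ≤ ((k : ℝ) ^ 2)⁻¹ / gg M := by gcongr
    _ = (gg M)⁻¹ * ((k : ℝ) ^ 2)⁻¹ := by rw [div_eq_mul_inv, mul_comm]

lemma hh_tsum_pow {M : ℕ} (hM : M ≠ 0) {p : ℕ} (hp : p.Prime) :
    ∑' e : ℕ, hh M (p ^ e) =
      if p ∣ M then (1 - ((p:ℝ)^3)⁻¹)⁻¹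
      else 1 + (p:ℝ)^2 / (((p:ℝ)^2 - 1) * ((p:ℝ)^3 - 1)) := by
  set a := M.factorization p with hadef
  set M' := M / p ^ a with hM'def
  have hMeq : p ^ a * M' = M := Nat.ordProj_mul_ordCompl_eq_self M p
  have hpM' : ¬ p ∣ M' := Nat.not_dvd_ordCompl hp hM
  have hM'ne : M' ≠ 0 := by
    intro h
    rw [h, mul_zero] at hMeq
    exact hM hMeq.symm
  have hco : ∀ e : ℕ, Nat.Coprime (p ^ e) M' :=
    fun e => Nat.Coprime.pow_left _ ((Nat.Prime.coprime_iff_not_dvd hp).mpr hpM')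
  have hloc : ∀ e : ℕ, hh M (p ^ e) = gg (p ^ (e + a)) / gg (p ^ a) := by
    intro e
    rw [hh_apply, ← hMeq, ← mul_assoc, ← pow_add,
      gg_mult.map_mul_of_coprime (hco (e + a)), gg_mult.map_mul_of_coprime (hco a),
      mul_div_mul_right _ _ (gg_pos (Nat.pos_of_ne_zero hM'ne)).ne']
  rw [tsum_congr hloc]
  by_cases hdvd : p ∣ M
  · rw [if_pos hdvd]
    have ha1 : 1 ≤ a := by
      rw [hadef]
      exact (Nat.Prime.factorization_pos_of_dvd hp hM hdvd)
    obtain ⟨a', ha'⟩ : ∃ a', a = a' + 1 := ⟨a - 1, by omega⟩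
    rw [ha', tsum_div_const, gg_tsum_shift hp a', gg_prime_pow hp (by omega)]
    have h2 : (2:ℝ) ≤ (p:ℝ) := pR2 hp
    have hc0 : (p:ℝ)^2 / ((p:ℝ)^2 - 1) * (((p:ℝ)^3)⁻¹)^(a'+1) ≠ 0 := by
      have h21 : ((p:ℝ)^2 - 1) ≠ 0 := by nlinarith
      have hp0 : (p:ℝ) ≠ 0 := by linarith
      positivity
    rw [mul_comm _ ((1 - ((p:ℝ)^3)⁻¹)⁻¹), mul_div_assoc, div_self hc0, mul_one]
  · rw [if_neg hdvd]
    have ha0 : a = 0 := Nat.factorization_eq_zero_of_not_dvd hdvd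
    rw [ha0]
    simp only [add_zero, pow_zero, gg_one, div_one]
    exact gg_tsum_pow hp

noncomputable def Tf (p : ℕ) : ℝ := 1 + (p:ℝ)^2 / (((p:ℝ)^2 - 1) * ((p:ℝ)^3 - 1))

noncomputable def Wf (p : ℕ) : ℝ := (1 - ((p:ℝ)^2)⁻¹) * (1 - ((p:ℝ)^3)⁻¹) + ((p:ℝ)^3)⁻¹

lemma Tf_pos {p : ℕ} (hp : p.Prime) : 0 < Tf p := by
  have h2 : (2:ℝ) ≤ (p:ℝ) := pR2 hp
  have h21 : (0:ℝ) < (p:ℝ)^2 - 1 := by nlinarith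
  have h31 : (0:ℝ) < (p:ℝ)^3 - 1 := by nlinarith
  have : 0 < (p:ℝ)^2 / (((p:ℝ)^2 - 1) * ((p:ℝ)^3 - 1)) := by positivity
  unfold Tf
  linarith

lemma Wf_pos {p : ℕ} (hp : p.Prime) : 0 < Wf p := by
  have h2 : (2:ℝ) ≤ (p:ℝ) := pR2 hp
  have hp0 : (0:ℝ) < (p:ℝ) := by linarith
  have e1 : (0:ℝ) < 1 - ((p:ℝ)^2)⁻¹ := by
    rw [sub_pos, inv_lt_one_iff₀]
    right; nlinarith
  have e2 : (0:ℝ) < 1 - ((p:ℝ)^3)⁻¹ := by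
    rw [sub_pos]
    exact r_lt_one hp
  have e3 : (0:ℝ) < ((p:ℝ)^3)⁻¹ := by positivity
  unfold Wf
  nlinarith

lemma key_prime {p : ℕ} (hp : p.Prime) {e : ℕ} (he : 1 ≤ e) :
    gg (p ^ e) * ((1 - ((p:ℝ)^3)⁻¹)⁻¹ / Tf p) = (((p:ℝ) ^ e) ^ 3)⁻¹ * (Wf p)⁻¹ := by
  rw [gg_prime_pow hp he]
  have h2 : (2:ℝ) ≤ (p:ℝ) := pR2 hp
  have hp0 : (p:ℝ) ≠ 0 := by linarith
  have h8 : (2:ℝ)^3 ≤ (p:ℝ)^3 := pow_le_pow_left₀ (by norm_num) h2 3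
  have h4 : (2:ℝ)^2 ≤ (p:ℝ)^2 := pow_le_pow_left₀ (by norm_num) h2 2
  have h21' : (0:ℝ) < (p:ℝ)^2 - 1 := by norm_num at h4; linarith
  have h31' : (0:ℝ) < (p:ℝ)^3 - 1 := by norm_num at h8; linarith
  have h21 : ((p:ℝ)^2 - 1) ≠ 0 := h21'.ne'
  have h31 : ((p:ℝ)^3 - 1) ≠ 0 := h31'.ne'
  have hp3 : ((p:ℝ))^3 ≠ 0 := by positivity
  have hre : (((p:ℝ)^3)⁻¹)^e = (((p:ℝ)^e)^3)⁻¹ := by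
    rw [inv_pow, ← pow_mul, ← pow_mul, mul_comm]
  rw [hre]
  have hN : (0:ℝ) < ((p:ℝ)^2-1)*((p:ℝ)^3-1) + (p:ℝ)^2 := by nlinarith
  have hmain : (p:ℝ)^2 / ((p:ℝ)^2 - 1) * ((1 - ((p:ℝ)^3)⁻¹)⁻¹ / Tf p) = (Wf p)⁻¹ := by
    have hTf : Tf p = (((p:ℝ)^2-1)*((p:ℝ)^3-1) + (p:ℝ)^2)/(((p:ℝ)^2-1)*((p:ℝ)^3-1)) := by
      unfold Tf
      field_simp
    have hWf : Wf p = (((p:ℝ)^2-1)*((p:ℝ)^3-1) + (p:ℝ)^2)/((p:ℝ)^5) := by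
      unfold Wf
      have hp0' : (p:ℝ) ≠ 0 := hp0
      field_simp
    have h1r' : (1 - ((p:ℝ)^3)⁻¹) = ((p:ℝ)^3-1)/(p:ℝ)^3 := by field_simp
    rw [hTf, hWf, h1r', inv_div, inv_div]
    field_simp
  linear_combination (((p:ℝ)^e)^3)⁻¹ * hmain

/-- Fix a positive integer `M`.  With `f(m) = 2φ(m)/|GL₂(ℤ/mℤ)|` if `M ∣ m` and
`f(m) = φ(m)/|GL₂(ℤ/mℤ)|` otherwise, one has
`∑_{m≥1} f(m) = C_{d₁}·(1 + M^{-3} ∏_{ℓ ∣ M} ((1−ℓ^{-2})(1−ℓ^{-3}) + ℓ^{-3})⁻¹)`,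
where `C_{d₁} = ∑_{m≥1} φ(m)/|GL₂(ℤ/mℤ)| = ∏_ℓ (1 + ℓ²/((ℓ²−1)(ℓ³−1)))`. -/
theorem stmt_17 (M : ℕ) (hM : 0 < M) :
    (∑' m : ℕ+, (if M ∣ (m : ℕ) then 2 else 1) *
        (Nat.totient m : ℝ) / (Nat.card (GL (Fin 2) (ZMod m)) : ℝ) =
      (∑' m : ℕ+, (Nat.totient m : ℝ) / (Nat.card (GL (Fin 2) (ZMod m)) : ℝ)) *
        (1 + ((M : ℝ) ^ 3)⁻¹ *
          ∏ ℓ ∈ M.primeFactors,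
            ((1 - ((ℓ : ℝ) ^ 2)⁻¹) * (1 - ((ℓ : ℝ) ^ 3)⁻¹) + ((ℓ : ℝ) ^ 3)⁻¹)⁻¹)) ∧
    ∑' m : ℕ+, (Nat.totient m : ℝ) / (Nat.card (GL (Fin 2) (ZMod m)) : ℝ) =
      ∏' ℓ : Nat.Primes,
        (1 + (ℓ : ℝ) ^ 2 / (((ℓ : ℝ) ^ 2 - 1) * ((ℓ : ℝ) ^ 3 - 1))) := by
  have hMne : M ≠ 0 := hM.ne'
  -- identify the ℕ+-indexed sums with gg
  have hplus : ∀ m : ℕ+, (Nat.totient m : ℝ) / (Nat.card (GL (Fin 2) (ZMod m)) : ℝ)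
      = gg (m : ℕ) := fun m => rfl
  have hsupp : ∀ f : ℕ → ℝ, f 0 = 0 → ∑' m : ℕ+, f (m : ℕ) = ∑' n : ℕ, f n := by
    intro f hf
    refine Function.Injective.tsum_eq (fun a b h => PNat.coe_injective h) ?_
    intro n hn
    rcases Nat.eq_zero_or_pos n with rfl | hn'
    · exact absurd hf hn
    · exact ⟨⟨n, hn'⟩, rfl⟩
  have hCplus : ∑' m : ℕ+, gg (m : ℕ) = ∑' n : ℕ, gg n :=
    hsupp _ (by simp [gg_apply])
  -- Euler product for gg
  have EP1 : HasProd (fun p : Nat.Primes => Tf (p : ℕ)) (∑' n : ℕ, gg n) := by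
    have h := gg_mult.eulerProduct_hasProd gg_norm_summable
    have heq : (fun p : Nat.Primes => ∑' e : ℕ, gg ((p : ℕ) ^ e)) =
        fun p : Nat.Primes => Tf (p : ℕ) := funext fun p => gg_tsum_pow p.2
    rwa [heq] at h
  have conj2 : ∑' m : ℕ+, (Nat.totient m : ℝ) / (Nat.card (GL (Fin 2) (ZMod m)) : ℝ)
      = ∏' ℓ : Nat.Primes,
        (1 + (ℓ : ℝ) ^ 2 / (((ℓ : ℝ) ^ 2 - 1) * ((ℓ : ℝ) ^ 3 - 1))) := by
    rw [tsum_congr hplus, hCplus, ← EP1.tprod_eq]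
    rfl
  refine ⟨?_, conj2⟩
  -- Euler product for hh
  have EP2 : HasProd (fun p : Nat.Primes =>
      if (p : ℕ) ∣ M then (1 - (((p : ℕ) : ℝ) ^ 3)⁻¹)⁻¹ else Tf (p : ℕ))
      (∑' k : ℕ, hh M k) := by
    have h := (hh_mult hMne).eulerProduct_hasProd (hh_norm_summable hMne)
    have heq : (fun p : Nat.Primes => ∑' e : ℕ, hh M ((p : ℕ) ^ e)) =
        fun p : Nat.Primes =>
          if (p : ℕ) ∣ M then (1 - (((p : ℕ) : ℝ) ^ 3)⁻¹)⁻¹ else Tf (p : ℕ) := by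
      funext p
      rw [hh_tsum_pow hMne p.2]
      rfl
    rwa [heq] at h
  -- the finite correction factor
  classical
  set Gfun : Nat.Primes → ℝ := fun p =>
    if (p : ℕ) ∣ M then (1 - (((p : ℕ) : ℝ) ^ 3)⁻¹)⁻¹ / Tf (p : ℕ) else 1 with hGdef
  set s : Finset Nat.Primes := M.primeFactors.attach.map
    ⟨fun q => (⟨q.1, Nat.prime_of_mem_primeFactors q.2⟩ : Nat.Primes),
     fun a b h => by
      apply Subtype.ext
      have h2 := congrArg (Subtype.val : Nat.Primes → ℕ) h
      simpa using h2⟩ with hsdef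
  have hmem : ∀ p : Nat.Primes, p ∈ s ↔ (p : ℕ) ∈ M.primeFactors := by
    intro p
    constructor
    · intro hp
      rw [hsdef, Finset.mem_map] at hp
      obtain ⟨q, hq, rfl⟩ := hp
      exact q.2
    · intro hp
      rw [hsdef, Finset.mem_map]
      exact ⟨⟨(p : ℕ), hp⟩, Finset.mem_attach _ _, Subtype.ext rfl⟩
  have hG1 : ∀ p : Nat.Primes, p ∉ s → Gfun p = 1 := by
    intro p hp
    rw [hGdef]
    simp only
    rw [if_neg]
    intro hdvd
    exact hp ((hmem p).mpr (Nat.mem_primeFactors.mpr ⟨p.2, hdvd, hMne⟩))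
  have hpG : HasProd Gfun (∏ p ∈ s, Gfun p) := hasProd_prod_of_ne_finset_one hG1
  have hFG : (fun p : Nat.Primes =>
      if (p : ℕ) ∣ M then (1 - (((p : ℕ) : ℝ) ^ 3)⁻¹)⁻¹ else Tf (p : ℕ)) =
      fun p : Nat.Primes => Tf (p : ℕ) * Gfun p := by
    funext p
    rw [hGdef]
    by_cases hdvd : (p : ℕ) ∣ M
    · simp only [if_pos hdvd]
      rw [mul_div_cancel₀ _ (Tf_pos p.2).ne']
    · simp only [if_neg hdvd, mul_one]
  rw [hFG] at EP2
  have hprod : ∑' k : ℕ, hh M k = (∑' n : ℕ, gg n) * ∏ p ∈ s, Gfun p :=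
    EP2.unique (EP1.mul hpG)
  -- transfer the finite product to M.primeFactors
  have hsG : ∏ p ∈ s, Gfun p =
      ∏ q ∈ M.primeFactors, (1 - ((q : ℝ) ^ 3)⁻¹)⁻¹ / Tf q := by
    rw [hsdef, Finset.prod_map]
    rw [← Finset.prod_attach M.primeFactors
      (fun q => (1 - ((q : ℝ) ^ 3)⁻¹)⁻¹ / Tf q)]
    refine Finset.prod_congr rfl fun q _ => ?_
    rw [hGdef]
    simp only [Function.Embedding.coeFn_mk]
    exact if_pos (Nat.dvd_of_mem_primeFactors q.2)
  -- per-prime identity assembled over primeFactors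
  have hggM : gg M = ∏ q ∈ M.primeFactors, gg (q ^ M.factorization q) :=
    gg_prod_over hMne subset_rfl
  have hM3 : ((M : ℝ) ^ 3)⁻¹ =
      ∏ q ∈ M.primeFactors, (((q : ℝ) ^ M.factorization q) ^ 3)⁻¹ := by
    have hMfac : (M : ℝ) = ∏ q ∈ M.primeFactors, ((q : ℝ) ^ M.factorization q) := by
      conv_lhs => rw [← Nat.factorization_prod_pow_eq_self hMne]
      rw [Finsupp.prod]
      push_cast
      rfl
    rw [hMfac, ← Finset.prod_pow, ← Finset.prod_inv_distrib]
  have hkey : gg M * ∏ p ∈ s, Gfun p = ((M : ℝ) ^ 3)⁻¹ * ∏ q ∈ M.primeFactors, (Wf q)⁻¹ := by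
    rw [hsG, hggM, hM3, ← Finset.prod_mul_distrib, ← Finset.prod_mul_distrib]
    refine Finset.prod_congr rfl fun q hq => ?_
    have hqp : q.Prime := Nat.prime_of_mem_primeFactors hq
    have hqe : 1 ≤ M.factorization q :=
      hqp.factorization_pos_of_dvd hMne (Nat.dvd_of_mem_primeFactors hq)
    exact key_prime hqp hqe
  -- split the sum on the left
  have sum1 : Summable (fun m : ℕ+ => gg (m : ℕ)) :=
    gg_summable.comp_injective PNat.coe_injective
  have sum2 : Summable (fun m : ℕ+ => if M ∣ (m : ℕ) then gg (m : ℕ) else 0) := by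
    refine sum1.of_nonneg_of_le (fun m => ?_) (fun m => ?_)
    · split <;> simp [gg_nonneg]
    · split
      · exact le_refl _
      · exact gg_nonneg _
  have hsplit : ∀ m : ℕ+, (if M ∣ (m : ℕ) then (2:ℝ) else 1) *
      (Nat.totient m : ℝ) / (Nat.card (GL (Fin 2) (ZMod m)) : ℝ) =
      gg (m : ℕ) + (if M ∣ (m : ℕ) then gg (m : ℕ) else 0) := by
    intro m
    by_cases hdvd : M ∣ (m : ℕ)
    · rw [if_pos hdvd, if_pos hdvd, gg_apply]
      ring
    · rw [if_neg hdvd, if_neg hdvd, gg_apply]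
      ring
  -- reindex the sum over multiples of M
  have hmult1 : ∑' m : ℕ+, (if M ∣ (m : ℕ) then gg (m : ℕ) else 0) =
      ∑' k : ℕ+, gg ((k : ℕ) * M) := by
    symm
    have hinj : Function.Injective (fun k : ℕ+ => k * M.toPNat hM) := by
      intro a b h
      have h' : (a : ℕ) * M = (b : ℕ) * M := congrArg PNat.val h
      exact PNat.coe_injective (Nat.eq_of_mul_eq_mul_right hM h')
    have key := Function.Injective.tsum_eq hinj
      (f := fun m : ℕ+ => if M ∣ (m : ℕ) then gg (m : ℕ) else 0) ?_
    · rw [← key]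
      refine tsum_congr fun k => ?_
      have hcoe : ((k * M.toPNat hM : ℕ+) : ℕ) = (k : ℕ) * M := rfl
      simp only [hcoe]
      rw [if_pos (dvd_mul_left M (k:ℕ))]
    · intro m hm
      have hdvd : M ∣ (m : ℕ) := by
        by_contra hc
        rw [Function.mem_support] at hm
        rw [if_neg hc] at hm
        exact hm rfl
      obtain ⟨c, hc⟩ := hdvd
      have hcpos : 0 < c := by
        rcases Nat.eq_zero_or_pos c with rfl | h
        · rw [mul_zero] at hc
          exact absurd hc m.2.ne'
        · exact h
      refine ⟨⟨c, hcpos⟩, ?_⟩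
      apply PNat.coe_injective
      show c * M = (m : ℕ)
      rw [hc, mul_comm]
  have hmult2 : ∑' k : ℕ+, gg ((k : ℕ) * M) = ∑' k : ℕ, gg (k * M) :=
    hsupp (fun k => gg (k * M)) (by simp [gg_apply])
  have hggMpos : 0 < gg M := gg_pos hM
  have hmult3 : ∑' k : ℕ, gg (k * M) = gg M * ∑' k : ℕ, hh M k := by
    rw [← tsum_mul_left]
    refine tsum_congr fun k => ?_
    rw [hh_apply, mul_div_cancel₀ _ hggMpos.ne']
  -- put everything together
  rw [tsum_congr hsplit, Summable.tsum_add sum1 sum2, hmult1, hmult2, hmult3, hprod,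
    tsum_congr hplus, hCplus]
  have : gg M * ((∑' n : ℕ, gg n) * ∏ p ∈ s, Gfun p) =
      (∑' n : ℕ, gg n) * (((M : ℝ) ^ 3)⁻¹ * ∏ q ∈ M.primeFactors, (Wf q)⁻¹) := by
    rw [← hkey]
    ring
  rw [this]
  unfold Wf
  ring
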